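/- Let R be a ring and suppose every left R-module satisfies: every submodule inclusion is pure. Then R is von Neumann regular. Conversely, if R is von Neumann regular, then every submodule of every left R-module is a pure submodule. -/

import Mathlib

section VNRAux

variable {R : Type*} [Ring R]

/-- In a von Neumann regular ring, every f.g. left ideal is generated by an idempotent. -/
theorem myIdem (hreg : ∀ a : R, ∃ x : R, a * x * a = a) (I : Submodule R R) (hI : I.FG) :
    ∃ e : R, e * e = e ∧ I = Submodule.span R {e} := by
  refine Submodule.fg_induction (motive := fun I _ => ∃ e : R, e * e = e ∧ I = Submodule.span R {e})
    (fun a => ?_) (fun I J _ _ hI hJ => ?_) I hI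
  · obtain ⟨x, hx⟩ := hreg a
    refine ⟨x * a, ?_, le_antisymm ?_ ?_⟩
    · rw [mul_assoc x a (x*a), ← mul_assoc a x a, hx]
    · rw [Submodule.span_singleton_le_iff_mem, Submodule.mem_span_singleton]
      exact ⟨a, by rw [smul_eq_mul, ← mul_assoc, hx]⟩
    · rw [Submodule.span_singleton_le_iff_mem, Submodule.mem_span_singleton]
      exact ⟨x, rfl⟩
  · obtain ⟨e, he, rfl⟩ := hI
    obtain ⟨f, hf, rfl⟩ := hJ
    obtain ⟨h, hh⟩ : ∃ h : R, h = f - f * e := ⟨_, rfl⟩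
    obtain ⟨y, hy⟩ := hreg h
    obtain ⟨g₁, hg1⟩ : ∃ g₁ : R, g₁ = y * h := ⟨_, rfl⟩
    obtain ⟨g, hg⟩ : ∃ g : R, g = e + g₁ - e * g₁ := ⟨_, rfl⟩
    have hhe : h * e = 0 := by rw [hh, sub_mul, mul_assoc, he, sub_self]
    have hg₁e : g₁ * e = 0 := by rw [hg1, mul_assoc, hhe, mul_zero]
    have hg₁g₁ : g₁ * g₁ = g₁ := by rw [hg1, mul_assoc y h (y*h), ← mul_assoc h y h, hy]
    have heg : e * g = e := by
      rw [hg, mul_sub, mul_add, ← mul_assoc, he, add_sub_cancel_right]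
    have hg₁g : g₁ * g = g₁ := by
      rw [hg, mul_sub, mul_add, ← mul_assoc, hg₁e, hg₁g₁, zero_mul, zero_add, sub_zero]
    have hgg : g * g = g := by
      nth_rewrite 1 [hg]
      rw [sub_mul, add_mul, heg, hg₁g, mul_assoc, hg₁g, ← hg]
    have hhy : h * g₁ = h := by rw [hg1, ← mul_assoc, hy]
    have hhg : h * g = h := by
      conv_lhs => rw [← hhy]
      rw [mul_assoc, hg₁g, hhy]
    have hf' : f * e + h = f := by rw [hh]; noncomm_ring
    have hfg : f * g = f := by
      rw [← hf', add_mul, mul_assoc, heg, hhg]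
    have hgmem : g ∈ Submodule.span R {e} ⊔ Submodule.span R {f} := by
      have hemem : e ∈ Submodule.span R {e} ⊔ Submodule.span R {f} :=
        Submodule.mem_sup_left (Submodule.mem_span_singleton_self e)
      have hfmem : f ∈ Submodule.span R {e} ⊔ Submodule.span R {f} :=
        Submodule.mem_sup_right (Submodule.mem_span_singleton_self f)
      have hhmem : h ∈ Submodule.span R {e} ⊔ Submodule.span R {f} := by
        rw [hh]
        exact sub_mem hfmem (by simpa using Submodule.smul_mem _ f hemem)
      have hg₁mem : g₁ ∈ Submodule.span R {e} ⊔ Submodule.span R {f} := by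
        rw [hg1]; simpa using Submodule.smul_mem _ y hhmem
      rw [hg]
      exact sub_mem (add_mem hemem hg₁mem) (by simpa using Submodule.smul_mem _ e hg₁mem)
    refine ⟨g, hgg, le_antisymm (sup_le ?_ ?_) ?_⟩
    · rw [Submodule.span_singleton_le_iff_mem, Submodule.mem_span_singleton]
      exact ⟨e, by rw [smul_eq_mul, heg]⟩
    · rw [Submodule.span_singleton_le_iff_mem, Submodule.mem_span_singleton]
      exact ⟨f, by rw [smul_eq_mul, hfg]⟩
    · rw [Submodule.span_singleton_le_iff_mem]; exact hgmem

/-- Every finitely generated submodule is the range of an idempotent endomorphism. -/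
def mySP (R M : Type*) [Ring R] [AddCommGroup M] [Module R M] : Prop :=
  ∀ N : Submodule R M, N.FG → ∃ π : M →ₗ[R] M, π ∘ₗ π = π ∧ LinearMap.range π = N

theorem mySP_self (hreg : ∀ a : R, ∃ x : R, a * x * a = a) : mySP R R := by
  intro N hN
  obtain ⟨e, he, rfl⟩ : ∃ e : R, e * e = e ∧ N = Submodule.span R {e} := myIdem hreg N hN
  refine ⟨LinearMap.toSpanSingleton R R e, ?_, ?_⟩
  · ext r
    simp [LinearMap.toSpanSingleton, smul_eq_mul, mul_assoc, he]
  · rw [← LinearMap.span_singleton_eq_range]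

theorem mySP_congr {M M₂ : Type*} [AddCommGroup M] [Module R M] [AddCommGroup M₂] [Module R M₂]
    (hsp : mySP R M) (eqv : M ≃ₗ[R] M₂) : mySP R M₂ := by
  intro N hN
  obtain ⟨π, hπ2, hπr⟩ := hsp (N.map eqv.symm.toLinearMap) (hN.map _)
  refine ⟨eqv.toLinearMap ∘ₗ π ∘ₗ eqv.symm.toLinearMap, ?_, ?_⟩
  · ext z
    have := DFunLike.congr_fun hπ2 (eqv.symm z)
    simp at this ⊢
    simp [this]
  · ext z
    constructor
    · rintro ⟨w, rfl⟩
      have : π (eqv.symm w) ∈ N.map eqv.symm.toLinearMap := hπr ▸ LinearMap.mem_range_self _ _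
      obtain ⟨u, hu, huw⟩ := this
      simp only [LinearMap.coe_comp, Function.comp_apply, LinearEquiv.coe_coe]
      rw [← huw]
      simpa using hu
    · intro hz
      have : eqv.symm z ∈ N.map eqv.symm.toLinearMap := ⟨z, hz, rfl⟩
      rw [← hπr] at this
      obtain ⟨w, hw⟩ := this
      exact ⟨eqv w, by simp [hw]⟩

theorem mySP_prod {M M' : Type*} [AddCommGroup M] [Module R M] [AddCommGroup M'] [Module R M']
    [Module.Projective R M'] (hM : mySP R M) (hM' : mySP R M') : mySP R (M × M') := by
  intro N hN
  set p' : M × M' →ₗ[R] M' := LinearMap.snd R M M' with hp'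
  obtain ⟨π', hπ'2, hπ'r⟩ := hM' (N.map p') (hN.map p')
  have hfix' : ∀ x ∈ N.map p', π' x = x := by
    intro x hx
    rw [← hπ'r] at hx
    obtain ⟨w, rfl⟩ := hx
    exact DFunLike.congr_fun hπ'2 w
  set s : M' →ₗ[R] ↥(N.map p') :=
    π'.codRestrict (N.map p') (fun x => hπ'r ▸ LinearMap.mem_range_self π' x) with hs
  have hsval : ∀ x : M', (s x : M') = π' x := fun x => rfl
  have hproj : Module.Projective R ↥(N.map p') := by
    refine Module.Projective.of_split (N.map p').subtype s ?_
    ext x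
    exact hfix' x x.2
  set fN : ↥N →ₗ[R] ↥(N.map p') :=
    (p' ∘ₗ N.subtype).codRestrict (N.map p') (fun x => Submodule.mem_map_of_mem x.2) with hfN
  have hfNsurj : Function.Surjective fN := by
    rintro ⟨y, hy⟩
    obtain ⟨z, hz, rfl⟩ := hy
    exact ⟨⟨z, hz⟩, rfl⟩
  obtain ⟨gN, hgN⟩ := Module.projective_lifting_property fN LinearMap.id hfNsurj
  have hgNval : ∀ w : ↥(N.map p'), p' ((gN w : M × M')) = (w : M') := by
    intro w
    have := DFunLike.congr_fun hgN w
    simpa [hfN] using congrArg (Subtype.val) this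
  set e₂ : M × M' →ₗ[R] M × M' := N.subtype ∘ₗ gN ∘ₗ s ∘ₗ p' with he₂
  have he₂N : ∀ z, e₂ z ∈ N := fun z => (gN (s (p' z))).2
  have hpe₂ : ∀ z, p' (e₂ z) = π' (p' z) := fun z => hgNval (s (p' z))
  have hsπ' : ∀ w : M', s (π' w) = s w := by
    intro w
    apply Subtype.ext
    rw [hsval, hsval]
    exact DFunLike.congr_fun hπ'2 w
  have he₂2 : ∀ z, e₂ (e₂ z) = e₂ z := by
    intro z
    show N.subtype (gN (s (p' (e₂ z)))) = _
    rw [hpe₂ z, hsπ']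
    rfl
  have hsub : ∀ z ∈ N, z - e₂ z ∈ N ⊓ LinearMap.ker p' := by
    intro z hz
    refine Submodule.mem_inf.mpr ⟨sub_mem hz (he₂N z), ?_⟩
    rw [LinearMap.mem_ker, map_sub, hpe₂ z, hfix' (p' z) (Submodule.mem_map_of_mem hz), sub_self]
  have hK₀ : N ⊓ LinearMap.ker p' = N.map (LinearMap.id - e₂) := by
    apply le_antisymm
    · intro k hk
      obtain ⟨hkN, hkker⟩ := Submodule.mem_inf.mp hk
      refine ⟨k, hkN, ?_⟩
      have hpk : p' k = 0 := LinearMap.mem_ker.mp hkker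
      have : e₂ k = 0 := by
        show N.subtype (gN (s (p' k))) = 0
        rw [hpk, map_zero, map_zero, map_zero]
      simp [this]
    · rintro z ⟨w, hw, rfl⟩
      simpa using hsub w hw
  have hK₀fg : (N ⊓ LinearMap.ker p').FG := by rw [hK₀]; exact hN.map _
  set K : Submodule R M := (N ⊓ LinearMap.ker p').map (LinearMap.fst R M M') with hK
  obtain ⟨π₁, hπ₁2, hπ₁r⟩ := hM K (hK₀fg.map _)
  have hfix₁ : ∀ x ∈ K, π₁ x = x := by
    intro x hx
    rw [← hπ₁r] at hx
    obtain ⟨w, rfl⟩ := hx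
    exact DFunLike.congr_fun hπ₁2 w
  have hK₀shape : ∀ z ∈ N ⊓ LinearMap.ker p', z.1 ∈ K ∧ z = (z.1, (0 : M')) := by
    intro z hz
    have hz2 : z.2 = 0 := LinearMap.mem_ker.mp (Submodule.mem_inf.mp hz).2
    exact ⟨⟨z, hz, rfl⟩, by rw [Prod.ext_iff]; exact ⟨rfl, hz2⟩⟩
  have hKN : ∀ x ∈ K, ((x, (0 : M')) : M × M') ∈ N := by
    rintro x ⟨z, hz, rfl⟩
    have h2 := (hK₀shape z hz).2
    show ((z.1, (0 : M')) : M × M') ∈ N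
    rw [← h2]
    exact (Submodule.mem_inf.mp hz).1
  set e₁ : M × M' →ₗ[R] M × M' := (LinearMap.inl R M M') ∘ₗ π₁ ∘ₗ (LinearMap.fst R M M') with he₁
  set e : M × M' →ₗ[R] M × M' := e₂ + e₁ ∘ₗ (LinearMap.id - e₂) with he
  have heN : ∀ z, e z ∈ N := by
    intro z
    have h1 : e z = e₂ z + (π₁ ((z - e₂ z).1), (0 : M')) := rfl
    rw [h1]
    exact add_mem (he₂N z) (hKN _ (hπ₁r ▸ LinearMap.mem_range_self π₁ _))
  have hefix : ∀ z ∈ N, e z = z := by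
    intro z hz
    have h1 : e z = e₂ z + (π₁ ((z - e₂ z).1), (0 : M')) := rfl
    obtain ⟨hmemK, hshape⟩ := hK₀shape (z - e₂ z) (hsub z hz)
    rw [h1, hfix₁ _ hmemK, ← hshape, add_sub_cancel]
  refine ⟨e, ?_, ?_⟩
  · exact LinearMap.ext fun z => hefix (e z) (heN z)
  · apply le_antisymm
    · rintro _ ⟨z, rfl⟩; exact heN z
    · intro z hz
      exact ⟨z, hefix z hz⟩

theorem mySP_pi (hreg : ∀ a : R, ∃ x : R, a * x * a = a) (n : ℕ) : mySP R (Fin n → R) := by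
  induction n with
  | zero =>
    intro N _
    refine ⟨0, by simp, ?_⟩
    have : N = ⊥ := Subsingleton.elim N ⊥
    simp [this]
  | succ n ih =>
    have hprod : mySP R (R × (Fin n → R)) := mySP_prod (mySP_self hreg) ih
    have eqv : (R × (Fin n → R)) ≃ₗ[R] (Fin (n+1) → R) :=
      (LinearEquiv.piOptionEquivProd R).symm.trans
        (LinearEquiv.piCongrLeft R (fun _ : Fin (n+1) => R) (finSuccEquiv n).symm)
    exact mySP_congr hprod eqv

theorem myGenInv (hreg : ∀ a : R, ∃ x : R, a * x * a = a) {k m : ℕ}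
    (f : (Fin k → R) →ₗ[R] (Fin m → R)) :
    ∃ g : (Fin m → R) →ₗ[R] (Fin k → R), ∀ y, f (g (f y)) = f y := by
  have hNfg : (LinearMap.range f).FG := by
    have h1 : (⊤ : Submodule R (Fin k → R)).FG := Module.Finite.fg_top
    rw [LinearMap.range_eq_map]
    exact h1.map f
  obtain ⟨π, hπ2, hπr⟩ := mySP_pi hreg m (LinearMap.range f) hNfg
  have hfix : ∀ x ∈ LinearMap.range f, π x = x := by
    intro x hx
    rw [← hπr] at hx
    obtain ⟨w, rfl⟩ := hx
    exact DFunLike.congr_fun hπ2 w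
  set s : (Fin m → R) →ₗ[R] ↥(LinearMap.range f) :=
    π.codRestrict (LinearMap.range f) (fun x => hπr ▸ LinearMap.mem_range_self π x) with hs
  have hproj : Module.Projective R ↥(LinearMap.range f) := by
    refine Module.Projective.of_split (LinearMap.range f).subtype s ?_
    refine LinearMap.ext fun x => Subtype.ext ?_
    exact hfix x x.2
  obtain ⟨sec, hsec⟩ :=
    Module.projective_lifting_property f.rangeRestrict LinearMap.id f.surjective_rangeRestrict
  refine ⟨sec ∘ₗ s, fun y => ?_⟩
  have h1 : s (f y) = ⟨f y, LinearMap.mem_range_self f y⟩ :=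
    Subtype.ext (hfix (f y) (LinearMap.mem_range_self f y))
  show f (sec (s (f y))) = f y
  rw [h1]
  have h2 := DFunLike.congr_fun hsec (⟨f y, LinearMap.mem_range_self f y⟩ : ↥(LinearMap.range f))
  simpa using congrArg Subtype.val h2

def myRowMul {k m : ℕ} (A : Matrix (Fin k) (Fin m) R) : (Fin k → R) →ₗ[R] (Fin m → R) where
  toFun y := fun j => ∑ i, y i * A i j
  map_add' y z := by funext j; simp [add_mul, Finset.sum_add_distrib]
  map_smul' c y := by funext j; simp [Finset.mul_sum, mul_assoc]

theorem myMatInv (hreg : ∀ a : R, ∃ x : R, a * x * a = a) {k m : ℕ}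
    (A : Matrix (Fin k) (Fin m) R) :
    ∃ B : Matrix (Fin m) (Fin k) R,
      ∀ i j', ∑ jm : Fin m, ∑ im : Fin k, A i jm * B jm im * A im j' = A i j' := by
  obtain ⟨g, hg⟩ := myGenInv hreg (myRowMul A)
  refine ⟨fun j i => g (Pi.single j 1) i, fun i j' => ?_⟩
  have hfs : myRowMul A (Pi.single i (1:R)) = fun j => A i j := by
    funext j
    simp [myRowMul, Pi.single_apply, ite_mul]
  have h2 : myRowMul A (g (fun j => A i j)) j' = A i j' := by
    have h := hg (Pi.single i (1:R))
    rw [hfs] at h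
    exact congrFun h j'
  have hexp : (fun j => A i j) = ∑ jm : Fin m, A i jm • (Pi.single jm (1:R) : Fin m → R) := by
    funext j
    rw [Finset.sum_apply]
    simp [Pi.single_apply]
  have h4 : ∀ im, g (fun j => A i j) im = ∑ jm, A i jm * g (Pi.single jm 1) im := by
    intro im
    conv_lhs => rw [hexp]
    rw [map_sum, Finset.sum_apply]
    refine Finset.sum_congr rfl fun jm _ => ?_
    rw [map_smul]
    rfl
  calc ∑ jm : Fin m, ∑ im : Fin k, A i jm * g (Pi.single jm 1) im * A im j'
      = ∑ im : Fin k, ∑ jm : Fin m, A i jm * g (Pi.single jm 1) im * A im j' :=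
        Finset.sum_comm
    _ = ∑ im : Fin k, (∑ jm : Fin m, A i jm * g (Pi.single jm 1) im) * A im j' := by
        simp [Finset.sum_mul]
    _ = ∑ im : Fin k, g (fun j => A i j) im * A im j' := by
        refine Finset.sum_congr rfl fun im _ => ?_
        rw [h4 im]
    _ = myRowMul A (g (fun j => A i j)) j' := rfl
    _ = A i j' := h2

end VNRAux

/-- All submodule inclusions of left `R`-modules are pure (in the sense of
solvability of finite linear equation systems) if and only if `R` is
von Neumann regular. -/
theorem stmt_7.{u} {R : Type u} [Ring R] :
    (∀ (M : Type u) [AddCommGroup M] [Module R M] (N : Submodule R M),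
      ∀ (k m : ℕ) (A : Matrix (Fin k) (Fin m) R) (v : Fin k → N),
        (∃ x : Fin m → M, ∀ i, ∑ j, A i j • x j = (v i : M)) →
        (∃ x : Fin m → N, ∀ i, ∑ j, A i j • x j = v i)) ↔
    (∀ a : R, ∃ x : R, a * x * a = a) := by
  constructor
  · intro hpure a
    obtain ⟨y, hy⟩ := hpure R (Submodule.span R {a}) 1 1 (fun _ _ => a)
      (fun _ => ⟨a, Submodule.mem_span_singleton_self a⟩)
      ⟨fun _ => 1, fun i => by simp⟩
    have h0 := congrArg Subtype.val (hy 0)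
    have ha : a * (y 0 : R) = a := by simpa [smul_eq_mul] using h0
    obtain ⟨r, hr⟩ := Submodule.mem_span_singleton.mp (y 0).2
    rw [smul_eq_mul] at hr
    exact ⟨r, by rw [mul_assoc, hr]; exact ha⟩
  · intro hreg M _ _ N k m A v hex
    obtain ⟨x, hx⟩ := hex
    obtain ⟨B, hB⟩ := myMatInv hreg A
    refine ⟨fun j => ∑ i, B j i • v i, fun i => ?_⟩
    apply Subtype.ext
    show (↑(∑ j, A i j • ∑ i', B j i' • v i') : M) = ↑(v i)
    rw [AddSubmonoidClass.coe_finset_sum]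
    calc ∑ j, (↑(A i j • ∑ i', B j i' • v i') : M)
        = ∑ j, ∑ i', ∑ j', ((A i j * B j i') * A i' j') • x j' := by
          refine Finset.sum_congr rfl fun j _ => ?_
          rw [SetLike.val_smul, AddSubmonoidClass.coe_finset_sum, Finset.smul_sum]
          refine Finset.sum_congr rfl fun i' _ => ?_
          rw [SetLike.val_smul, smul_smul, ← hx i', Finset.smul_sum]
          exact Finset.sum_congr rfl fun j'' _ => smul_smul _ _ _
      _ = ∑ j, ∑ j', ∑ i', ((A i j * B j i') * A i' j') • x j' :=
          Finset.sum_congr rfl fun j _ => Finset.sum_comm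
      _ = ∑ j', ∑ j, ∑ i', ((A i j * B j i') * A i' j') • x j' := Finset.sum_comm
      _ = ∑ j', (∑ j, ∑ i', (A i j * B j i') * A i' j') • x j' := by
          refine Finset.sum_congr rfl fun j' _ => ?_
          rw [Finset.sum_smul]
          refine Finset.sum_congr rfl fun j _ => ?_
          rw [Finset.sum_smul]
      _ = ∑ j', A i j' • x j' := by
          refine Finset.sum_congr rfl fun j' _ => ?_
          rw [hB i j']
      _ = ↑(v i) := hx i
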